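/- Let t ≥ r be positive integers, let γ ∈ [0,1] and δ ∈ (0,1] be reals with r ≥ 8/δ³, and let X_0,…,X_{t−1} be independent random variables taking values in [0,1] with E[X_i] = p for every i, where p ≥ γ + δ. Then P( there exists i with r ≤ i ≤ t such that X_0 + X_1 + ⋯ + X_{i−1} ≤ i·γ + i^{2/3} ) ≤ e^{−δ² r / 2} / (1 − e^{−δ²/2}). Equivalently, the Separate algorithm (which returns false at the first index i ∈ {r,…,t} with ∑_{j<i} X_j ≤ i·γ + i^{2/3}, and true if no such i exists) returns true with probability at least 1 − e^{−δ² r / 2} / (1 − e^{−δ²/2}). -/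

import Mathlib

open MeasureTheory ProbabilityTheory


lemma my_pinsker {q p : ℝ} (hq : 0 < q) (hqp : q < p) (hp : p < 1) :
    2 * (p - q) ^ 2 ≤ q * Real.log (q / p) + (1 - q) * Real.log ((1 - q) / (1 - p)) := by
  set g : ℝ → ℝ := fun x => q * Real.log q - q * Real.log x + (1 - q) * Real.log (1 - q)
    - (1 - q) * Real.log (1 - x) - 2 * (x - q) ^ 2 with hg
  have hderiv : ∀ x, 0 < x → x < 1 → HasDerivAt g
      (-(q * x⁻¹) + (1 - q) * (1 - x)⁻¹ - 4 * (x - q)) x := by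
    intro x hx0 hx1
    have h1 : HasDerivAt (fun y : ℝ => Real.log y) x⁻¹ x := Real.hasDerivAt_log hx0.ne'
    have h2 : HasDerivAt (fun y : ℝ => Real.log (1 - y)) (-(1 - x)⁻¹) x := by
      have hinner : HasDerivAt (fun y : ℝ => 1 - y) (-1) x := by
        simpa using (hasDerivAt_id' x).const_sub (1 : ℝ)
      have := (Real.hasDerivAt_log (by linarith : (1 : ℝ) - x ≠ 0)).comp x hinner
      rw [show (-(1 - x)⁻¹ : ℝ) = (1 - x)⁻¹ * -1 by ring]
      exact this
    have h3 : HasDerivAt (fun y : ℝ => 2 * (y - q) ^ 2) (4 * (x - q)) x := by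
      have h := (((hasDerivAt_id x).sub_const q).pow 2).const_mul (2 : ℝ)
      exact h.congr_deriv (by simp; ring)
    have := ((((hasDerivAt_const x (q * Real.log q)).sub (h1.const_mul q)).add
      (hasDerivAt_const x ((1 - q) * Real.log (1 - q)))).sub (h2.const_mul (1 - q))).sub h3
    exact this.congr_deriv (by ring)
  have hmono : MonotoneOn g (Set.Icc q p) := by
    apply monotoneOn_of_deriv_nonneg (convex_Icc q p)
    · intro x hx
      have hx0 : 0 < x := lt_of_lt_of_le hq hx.1
      have hx1 : x < 1 := lt_of_le_of_lt hx.2 hp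
      exact ((hderiv x hx0 hx1).continuousAt).continuousWithinAt
    · rw [interior_Icc]
      intro x hx
      have hx0 : 0 < x := lt_trans hq hx.1
      have hx1 : x < 1 := lt_trans hx.2 hp
      exact (hderiv x hx0 hx1).differentiableAt.differentiableWithinAt
    · rw [interior_Icc]
      intro x hx
      have hx0 : 0 < x := lt_trans hq hx.1
      have hx1 : x < 1 := lt_trans hx.2 hp
      rw [(hderiv x hx0 hx1).deriv]
      have hne : (1 : ℝ) - x ≠ 0 := by linarith
      have hpos : 0 < x * (1 - x) := mul_pos hx0 (by linarith)
      have key : -(q * x⁻¹) + (1 - q) * (1 - x)⁻¹ - 4 * (x - q)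
          = (x - q) * (2 * x - 1) ^ 2 / (x * (1 - x)) := by
        rw [eq_div_iff hpos.ne']
        field_simp [hne]
        ring
      rw [key]
      have hxq : 0 ≤ x - q := by linarith [hx.1]
      positivity
  have h0 : g q = 0 := by simp [hg]
  have h1 : g q ≤ g p := hmono (Set.left_mem_Icc.2 hqp.le) (Set.right_mem_Icc.2 hqp.le) hqp.le
  rw [h0, hg] at h1
  simp only at h1
  have e1 : Real.log (q / p) = Real.log q - Real.log p :=
    Real.log_div hq.ne' (by linarith)
  have e2 : Real.log ((1 - q) / (1 - p)) = Real.log (1 - q) - Real.log (1 - p) :=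
    Real.log_div (by linarith) (by linarith)
  rw [e1, e2]
  nlinarith [h1]


lemma my_exp_convex {x : ℝ} (hx0 : 0 ≤ x) (hx1 : x ≤ 1) (u : ℝ) :
    Real.exp (u * x) ≤ 1 - x + x * Real.exp u := by
  calc Real.exp (u * x) = Real.exp ((1 - x) * 0 + x * u) := by ring_nf
    _ ≤ (1 - x) * Real.exp 0 + x * Real.exp u := by
        simpa using convexOn_exp.2 (Set.mem_univ (0 : ℝ)) (Set.mem_univ u)
          (by linarith : (0:ℝ) ≤ 1 - x) hx0 (by ring)
    _ = 1 - x + x * Real.exp u := by simp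

lemma my_card (t i : ℕ) (hit : i ≤ t) :
    (Finset.univ.filter (fun j : Fin t => (j : ℕ) < i)).card = i := by
  have hf : Finset.filter (fun j => j < i) (Finset.range t) = Finset.range i := by
    ext j
    simp only [Finset.mem_filter, Finset.mem_range]
    omega
  rw [Finset.card_filter]
  rw [Fin.sum_univ_eq_sum_range (fun j => if j < i then 1 else 0)]
  rw [← Finset.sum_filter, hf]
  simp

lemma my_chernoff {Ω : Type*} [MeasurableSpace Ω] (P : Measure Ω) [IsProbabilityMeasure P]
    (t : ℕ) (X : Fin t → Ω → ℝ) (hXmeas : ∀ i, Measurable (X i))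
    (hX01 : ∀ i ω, X i ω ∈ Set.Icc (0 : ℝ) 1)
    (hindep : iIndepFun (m := fun _ : Fin t => (inferInstance : MeasurableSpace ℝ)) X P)
    (p : ℝ) (hmean : ∀ i, ∫ ω, X i ω ∂P = p)
    (q : ℝ) (hq0 : 0 < q) (hqp : q < p) (hp1 : p < 1)
    (i : ℕ) (hit : i ≤ t) (a : ℝ) (ha : a ≤ (i : ℝ) * q) :
    (P {ω | (∑ j : Fin t, if (j : ℕ) < i then X j ω else 0) ≤ a}).toReal
      ≤ Real.exp (-(q * Real.log (q / p) + (1 - q) * Real.log ((1 - q) / (1 - p))) * i) := by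
  classical
  have hq1 : q < 1 := lt_trans hqp hp1
  have hp0 : 0 < p := lt_trans hq0 hqp
  set s : Finset (Fin t) := Finset.univ.filter (fun j : Fin t => (j : ℕ) < i) with hs
  have hcard : s.card = i := my_card t i hit
  -- rewrite the event
  have hseteq : {ω | (∑ j : Fin t, if (j : ℕ) < i then X j ω else 0) ≤ a}
      = {ω | (∑ j ∈ s, X j) ω ≤ a} := by
    ext ω
    simp only [Set.mem_setOf_eq, Finset.sum_apply, hs, Finset.sum_filter]
  rw [hseteq]
  set A : ℝ := p * (1 - q) / (q * (1 - p)) with hA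
  have hA1 : 1 < A := by
    rw [hA, lt_div_iff₀ (by nlinarith)]
    nlinarith
  set lam : ℝ := Real.log A with hlam
  have hlam0 : 0 < lam := Real.log_pos hA1
  set c : ℝ := q * (1 - p) / (p * (1 - q)) with hc
  have hc0 : 0 < c := by
    rw [hc]
    apply div_pos (by nlinarith) (by nlinarith)
  have hexpc : Real.exp (-lam) = c := by
    rw [Real.exp_neg, hlam, Real.exp_log (lt_trans zero_lt_one hA1), hA, hc, inv_div]
  set ρ : ℝ := (1 - p) / (1 - q) with hρ
  have hρ0 : 0 < ρ := by
    rw [hρ]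
    apply div_pos (by linarith) (by linarith)
  have hρc : 1 - p + p * c = ρ := by
    have h1 : p ≠ 0 := hp0.ne'
    have h2 : (1:ℝ) - q ≠ 0 := by linarith
    rw [hc, hρ]
    field_simp
    ring
  -- integrability facts
  have hXint : ∀ j, Integrable (X j) P := by
    intro j
    refine Integrable.mono' (integrable_const 1) (hXmeas j).aestronglyMeasurable ?_
    filter_upwards with ω
    rw [Real.norm_eq_abs, abs_le]
    exact ⟨by linarith [(hX01 j ω).1], (hX01 j ω).2⟩
  have hexpint : ∀ (f : Ω → ℝ), Measurable f → (∀ ω, 0 ≤ f ω) →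
      Integrable (fun ω => Real.exp (-lam * f ω)) P := by
    intro f hf hf0
    refine Integrable.mono' (integrable_const 1) ((hf.const_mul _).exp).aestronglyMeasurable ?_
    filter_upwards with ω
    rw [Real.norm_eq_abs, abs_of_nonneg (Real.exp_nonneg _)]
    rw [← Real.exp_zero]
    apply Real.exp_le_exp.2
    have := hf0 ω
    nlinarith
  have hSmeas : Measurable (∑ j ∈ s, X j) := by
    have : (∑ j ∈ s, X j) = fun ω => ∑ j ∈ s, X j ω := by
      ext ω; simp [Finset.sum_apply]
    rw [this]
    exact Finset.measurable_sum s (fun j _ => hXmeas j)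
  have hSnonneg : ∀ ω, 0 ≤ (∑ j ∈ s, X j) ω := by
    intro ω
    rw [Finset.sum_apply]
    exact Finset.sum_nonneg fun j _ => (hX01 j ω).1
  -- Chernoff
  have hcher := measure_le_le_exp_mul_mgf (X := ∑ j ∈ s, X j) (μ := P) (t := -lam) a
    (by linarith) (hexpint _ hSmeas hSnonneg)
  rw [neg_neg] at hcher
  -- mgf factorization
  have hmgf : mgf (∑ j ∈ s, X j) P (-lam) = ∏ j ∈ s, mgf (X j) P (-lam) :=
    hindep.mgf_sum hXmeas s
  -- per-factor bound
  have hfac : ∀ j ∈ s, mgf (X j) P (-lam) ≤ ρ := by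
    intro j _
    have hint1 : Integrable (fun ω => Real.exp (-lam * X j ω)) P :=
      hexpint _ (hXmeas j) (fun ω => (hX01 j ω).1)
    have hint2 : Integrable (fun ω => 1 - X j ω + X j ω * c) P := by
      apply Integrable.add
      · exact (integrable_const 1).sub (hXint j)
      · exact (hXint j).mul_const c
    have hmono : ∀ ω, Real.exp (-lam * X j ω) ≤ 1 - X j ω + X j ω * c := by
      intro ω
      have := my_exp_convex (hX01 j ω).1 (hX01 j ω).2 (-lam)
      rwa [hexpc] at this
    calc mgf (X j) P (-lam) = ∫ ω, Real.exp (-lam * X j ω) ∂P := rfl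
      _ ≤ ∫ ω, (1 - X j ω + X j ω * c) ∂P := integral_mono hint1 hint2 hmono
      _ = ∫ ω, (1 + (c - 1) * X j ω) ∂P := by
          apply integral_congr_ae
          filter_upwards with ω
          ring
      _ = 1 + (c - 1) * p := by
          rw [integral_add (integrable_const 1) ((hXint j).const_mul (c - 1)),
            integral_const, MeasureTheory.integral_const_mul, hmean j]
          simp
      _ = 1 - p + p * c := by ring
      _ = ρ := hρc
  have hprod : ∏ j ∈ s, mgf (X j) P (-lam) ≤ ρ ^ i := by
    rw [← hcard]
    rw [← Finset.prod_const]
    exact Finset.prod_le_prod (fun j _ => mgf_nonneg) hfac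
  -- combine
  have hmain : (P {ω | (∑ j ∈ s, X j) ω ≤ a}).toReal ≤ Real.exp (lam * a) * ρ ^ i := by
    calc (P {ω | (∑ j ∈ s, X j) ω ≤ a}).toReal ≤ Real.exp (lam * a) * mgf (∑ j ∈ s, X j) P (-lam) :=
          hcher
      _ ≤ Real.exp (lam * a) * (ρ ^ i) := by
          rw [hmgf]
          exact mul_le_mul_of_nonneg_left hprod (Real.exp_nonneg _)
  refine hmain.trans ?_
  have hrw : Real.exp (lam * a) * ρ ^ i ≤ Real.exp (lam * ((i : ℝ) * q)) * ρ ^ i := by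
    apply mul_le_mul_of_nonneg_right _ (pow_nonneg hρ0.le i)
    exact Real.exp_le_exp.2 (mul_le_mul_of_nonneg_left ha hlam0.le)
  refine hrw.trans ?_
  have hρexp : ρ ^ i = Real.exp ((i : ℝ) * Real.log ρ) := by
    rw [Real.exp_nat_mul, Real.exp_log hρ0]
  rw [hρexp, ← Real.exp_add]
  apply Real.exp_le_exp.2
  have hkey : lam * q + Real.log ρ = -(q * Real.log (q / p) + (1 - q) * Real.log ((1 - q) / (1 - p))) := by
    rw [hlam, hA, hρ, Real.log_div (by nlinarith) (by nlinarith),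
      Real.log_mul hp0.ne' (by linarith : (1:ℝ) - q ≠ 0),
      Real.log_mul hq0.ne' (by linarith : (1:ℝ) - p ≠ 0),
      Real.log_div (by linarith : (1:ℝ) - p ≠ 0) (by linarith : (1:ℝ) - q ≠ 0),
      Real.log_div hq0.ne' hp0.ne',
      Real.log_div (by linarith : (1:ℝ) - q ≠ 0) (by linarith : (1:ℝ) - p ≠ 0)]
    ring
  have hring : lam * ((i:ℝ) * q) + (i:ℝ) * Real.log ρ = (lam * q + Real.log ρ) * i := by ring
  rw [hring, hkey]


/-- **Success probability of the Separate algorithm under high similarity.** Let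
`t ≥ r ≥ 8/δ³` be positive integers, `γ ∈ [0,1]`, `δ ∈ (0,1]`, and let `X_0,…,X_{t−1}`
be independent `[0,1]`-valued random variables with common mean `p ≥ γ + δ`. Then the
probability that some index `i` with `r ≤ i ≤ t` satisfies
`X_0 + ⋯ + X_{i−1} ≤ i·γ + i^{2/3}` (i.e. that `Separate` returns `false`) is at most
`e^{−δ²r/2}/(1 − e^{−δ²/2})`. -/
theorem stmt15 {Ω : Type*} [MeasurableSpace Ω] (P : Measure Ω) [IsProbabilityMeasure P]
    (t r : ℕ) (hr : 0 < r) (hrt : r ≤ t)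
    (γ δ p : ℝ) (hγ0 : 0 ≤ γ) (hγ1 : γ ≤ 1) (hδ0 : 0 < δ) (hδ1 : δ ≤ 1)
    (hrδ : (8 : ℝ) / δ ^ 3 ≤ (r : ℝ))
    (X : Fin t → Ω → ℝ) (hXmeas : ∀ i, Measurable (X i))
    (hX01 : ∀ i ω, X i ω ∈ Set.Icc (0 : ℝ) 1)
    (hindep : iIndepFun (m := fun _ : Fin t => (inferInstance : MeasurableSpace ℝ)) X P)
    (hmean : ∀ i, ∫ ω, X i ω ∂P = p) (hp : γ + δ ≤ p) :
    P {ω | ∃ i : ℕ, r ≤ i ∧ i ≤ t ∧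
        (∑ j : Fin t, if (j : ℕ) < i then X j ω else 0)
          ≤ (i : ℝ) * γ + (i : ℝ) ^ ((2 : ℝ) / 3)}
      ≤ ENNReal.ofReal
          (Real.exp (-(δ ^ 2) * (r : ℝ) / 2) / (1 - Real.exp (-(δ ^ 2) / 2))) := by
  classical
  have hXint : ∀ j, Integrable (X j) P := by
    intro j
    refine Integrable.mono' (integrable_const 1) (hXmeas j).aestronglyMeasurable ?_
    filter_upwards with ω
    rw [Real.norm_eq_abs, abs_le]
    exact ⟨by linarith [(hX01 j ω).1], (hX01 j ω).2⟩
  have hple1 : p ≤ 1 := by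
    have i0 : Fin t := ⟨0, by omega⟩
    rw [← hmean i0]
    calc ∫ ω, X i0 ω ∂P ≤ ∫ _ω, (1 : ℝ) ∂P :=
          integral_mono (hXint i0) (integrable_const 1) (fun ω => (hX01 i0 ω).2)
      _ = 1 := by simp
  set q : ℝ := p - δ / 2 with hqdef
  have hq0 : 0 < q := by simp only [hqdef]; linarith
  have hqp : q < p := by simp only [hqdef]; linarith
  have hq1 : q < 1 := by simp only [hqdef]; linarith
  -- the key deterministic bound on the threshold
  have ha : ∀ i : ℕ, r ≤ i → (i : ℝ) * γ + (i : ℝ) ^ ((2 : ℝ) / 3) ≤ (i : ℝ) * q := by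
    intro i hi
    have hir : (r : ℝ) ≤ (i : ℝ) := Nat.cast_le.2 hi
    have hi1 : (1 : ℝ) ≤ (i : ℝ) := by
      have : 1 ≤ i := le_trans hr hi
      exact_mod_cast this
    have hi0 : (0 : ℝ) < (i : ℝ) := by linarith
    have h8 : (8 : ℝ) / δ ^ 3 ≤ (i : ℝ) := le_trans hrδ hir
    have hcube : ((2 / δ : ℝ)) ^ (3 : ℕ) ≤ (i : ℝ) := by
      rw [div_pow]
      norm_num
      exact h8
    have hroot : (2 / δ : ℝ) ≤ (i : ℝ) ^ ((1 : ℝ) / 3) := by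
      have h := Real.rpow_le_rpow (by positivity) hcube (by norm_num : (0 : ℝ) ≤ 1 / 3)
      rw [← Real.rpow_natCast (2 / δ) 3, ← Real.rpow_mul (by positivity)] at h
      norm_num at h
      exact h
    have hkey : (i : ℝ) ^ ((2 : ℝ) / 3) * (2 / δ) ≤ (i : ℝ) := by
      calc (i : ℝ) ^ ((2 : ℝ) / 3) * (2 / δ)
          ≤ (i : ℝ) ^ ((2 : ℝ) / 3) * (i : ℝ) ^ ((1 : ℝ) / 3) :=
            mul_le_mul_of_nonneg_left hroot (Real.rpow_nonneg hi0.le _)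
        _ = (i : ℝ) := by
            rw [← Real.rpow_add hi0]
            norm_num
    have h23 : (i : ℝ) ^ ((2 : ℝ) / 3) ≤ δ / 2 * (i : ℝ) := by
      have hne : δ ≠ 0 := hδ0.ne'
      calc (i : ℝ) ^ ((2 : ℝ) / 3)
          = ((i : ℝ) ^ ((2 : ℝ) / 3) * (2 / δ)) * (δ / 2) := by
            field_simp
        _ ≤ (i : ℝ) * (δ / 2) := mul_le_mul_of_nonneg_right hkey (by positivity)
        _ = δ / 2 * (i : ℝ) := by ring
    have hγq : γ + δ / 2 ≤ q := by simp only [hqdef]; linarith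
    nlinarith
  -- rewrite the event as a finite union
  have hevent : {ω | ∃ i : ℕ, r ≤ i ∧ i ≤ t ∧
        (∑ j : Fin t, if (j : ℕ) < i then X j ω else 0)
          ≤ (i : ℝ) * γ + (i : ℝ) ^ ((2 : ℝ) / 3)}
      = ⋃ i ∈ Finset.Icc r t, {ω | (∑ j : Fin t, if (j : ℕ) < i then X j ω else 0)
          ≤ (i : ℝ) * γ + (i : ℝ) ^ ((2 : ℝ) / 3)} := by
    ext ω
    simp only [Set.mem_setOf_eq, Set.mem_iUnion, Finset.mem_Icc, exists_prop]
    constructor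
    · rintro ⟨i, h1, h2, h3⟩
      exact ⟨i, ⟨h1, h2⟩, h3⟩
    · rintro ⟨i, ⟨h1, h2⟩, h3⟩
      exact ⟨i, h1, h2, h3⟩
  by_cases hp1 : p < 1
  · -- main case
    have hKL : δ ^ 2 / 2 ≤ q * Real.log (q / p) + (1 - q) * Real.log ((1 - q) / (1 - p)) := by
      have h := my_pinsker hq0 hqp hp1
      have hpq : p - q = δ / 2 := by simp only [hqdef]; ring
      nlinarith
    have hbound : ∀ i ∈ Finset.Icc r t,
        P {ω | (∑ j : Fin t, if (j : ℕ) < i then X j ω else 0)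
            ≤ (i : ℝ) * γ + (i : ℝ) ^ ((2 : ℝ) / 3)}
          ≤ ENNReal.ofReal (Real.exp (-(δ ^ 2) / 2 * (i : ℕ))) := by
      intro i hi
      rw [Finset.mem_Icc] at hi
      have h1 := my_chernoff P t X hXmeas hX01 hindep p hmean q hq0 hqp hp1 i hi.2
        ((i : ℝ) * γ + (i : ℝ) ^ ((2 : ℝ) / 3)) (ha i hi.1)
      have h2 : Real.exp (-(q * Real.log (q / p) + (1 - q) * Real.log ((1 - q) / (1 - p))) * i)
          ≤ Real.exp (-(δ ^ 2) / 2 * (i : ℕ)) := by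
        apply Real.exp_le_exp.2
        have : (0 : ℝ) ≤ (i : ℕ) := Nat.cast_nonneg i
        nlinarith
      calc P {ω | (∑ j : Fin t, if (j : ℕ) < i then X j ω else 0)
            ≤ (i : ℝ) * γ + (i : ℝ) ^ ((2 : ℝ) / 3)}
          = ENNReal.ofReal ((P {ω | (∑ j : Fin t, if (j : ℕ) < i then X j ω else 0)
            ≤ (i : ℝ) * γ + (i : ℝ) ^ ((2 : ℝ) / 3)}).toReal) :=
            (ENNReal.ofReal_toReal (measure_ne_top P _)).symm
        _ ≤ ENNReal.ofReal (Real.exp (-(δ ^ 2) / 2 * (i : ℕ))) :=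
            ENNReal.ofReal_le_ofReal (h1.trans h2)
    -- geometric sum
    set x : ℝ := Real.exp (-(δ ^ 2) / 2) with hxdef
    have hx0 : 0 < x := Real.exp_pos _
    have hx1 : x < 1 := Real.exp_lt_one_iff.2 (by nlinarith)
    have hxne : x ≠ 1 := hx1.ne
    have hterm : ∀ i : ℕ, Real.exp (-(δ ^ 2) / 2 * (i : ℕ)) = x ^ i := by
      intro i
      rw [hxdef, mul_comm, Real.exp_nat_mul]
    have hgeom : ∑ i ∈ Finset.Icc r t, Real.exp (-(δ ^ 2) / 2 * (i : ℕ))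
        ≤ Real.exp (-(δ ^ 2) * (r : ℝ) / 2) / (1 - Real.exp (-(δ ^ 2) / 2)) := by
      have hsum : ∑ i ∈ Finset.Icc r t, Real.exp (-(δ ^ 2) / 2 * (i : ℕ))
          = x ^ r * ∑ k ∈ Finset.range (t + 1 - r), x ^ k := by
        rw [← Finset.Ico_add_one_right_eq_Icc, Finset.sum_Ico_eq_sum_range, Finset.mul_sum]
        apply Finset.sum_congr rfl
        intro k _
        rw [hterm, pow_add]
      have hgs : ∑ k ∈ Finset.range (t + 1 - r), x ^ k ≤ (1 - x)⁻¹ := by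
        rw [geom_sum_eq hxne]
        have hd1 : x - 1 ≠ 0 := sub_ne_zero.2 hxne
        have hd2 : (1 : ℝ) - x ≠ 0 := by intro h; exact hxne (by linarith)
        have h1 : (x ^ (t + 1 - r) - 1) / (x - 1) = (1 - x ^ (t + 1 - r)) / (1 - x) := by
          rw [div_eq_div_iff hd1 hd2]
          ring
        rw [h1, ← one_div]
        have hpow : 0 ≤ x ^ (t + 1 - r) := pow_nonneg hx0.le _
        gcongr
        · linarith
      rw [hsum]
      have hxr : x ^ r = Real.exp (-(δ ^ 2) * (r : ℝ) / 2) := by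
        rw [hxdef, ← Real.exp_nat_mul]
        congr 1
        ring
      rw [hxr, div_eq_mul_inv]
      apply mul_le_mul_of_nonneg_left hgs (Real.exp_nonneg _)
    calc P {ω | ∃ i : ℕ, r ≤ i ∧ i ≤ t ∧
          (∑ j : Fin t, if (j : ℕ) < i then X j ω else 0)
            ≤ (i : ℝ) * γ + (i : ℝ) ^ ((2 : ℝ) / 3)}
        ≤ ∑ i ∈ Finset.Icc r t, P {ω | (∑ j : Fin t, if (j : ℕ) < i then X j ω else 0)
            ≤ (i : ℝ) * γ + (i : ℝ) ^ ((2 : ℝ) / 3)} := by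
          rw [hevent]
          exact measure_biUnion_finset_le _ _
      _ ≤ ∑ i ∈ Finset.Icc r t, ENNReal.ofReal (Real.exp (-(δ ^ 2) / 2 * (i : ℕ))) :=
          Finset.sum_le_sum hbound
      _ = ENNReal.ofReal (∑ i ∈ Finset.Icc r t, Real.exp (-(δ ^ 2) / 2 * (i : ℕ))) :=
          (ENNReal.ofReal_sum_of_nonneg (fun i _ => (Real.exp_nonneg _))).symm
      _ ≤ ENNReal.ofReal (Real.exp (-(δ ^ 2) * (r : ℝ) / 2) / (1 - Real.exp (-(δ ^ 2) / 2))) :=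
          ENNReal.ofReal_le_ofReal hgeom
  · -- degenerate case p = 1
    have hp1' : p = 1 := le_antisymm hple1 (not_lt.1 hp1)
    have hXone : ∀ j : Fin t, ∀ᵐ ω ∂P, X j ω = 1 := by
      intro j
      have hint : Integrable (fun ω => 1 - X j ω) P := (integrable_const 1).sub (hXint j)
      have hzero : ∫ ω, (1 - X j ω) ∂P = 0 := by
        rw [integral_sub (integrable_const 1) (hXint j), hmean j]
        simp [hp1']
      have hnn : 0 ≤ fun ω => 1 - X j ω := fun ω => by
        have := (hX01 j ω).2
        simp only [Pi.zero_apply]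
        linarith
      have h0 := (integral_eq_zero_iff_of_nonneg hnn hint).1 hzero
      filter_upwards [h0] with ω hω
      simp only [Pi.zero_apply] at hω
      linarith [hω]
    have hae : ∀ᵐ ω ∂P, ∀ j : Fin t, X j ω = 1 := ae_all_iff.2 hXone
    have hsubset : {ω | ∃ i : ℕ, r ≤ i ∧ i ≤ t ∧
          (∑ j : Fin t, if (j : ℕ) < i then X j ω else 0)
            ≤ (i : ℝ) * γ + (i : ℝ) ^ ((2 : ℝ) / 3)}
        ⊆ {ω | ¬ ∀ j : Fin t, X j ω = 1} := by
      intro ω hω hall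
      obtain ⟨i, hri, hti, hsum⟩ := hω
      have hsum1 : (∑ j : Fin t, if (j : ℕ) < i then X j ω else 0) = (i : ℝ) := by
        calc (∑ j : Fin t, if (j : ℕ) < i then X j ω else 0)
            = ∑ j : Fin t, (if (j : ℕ) < i then (1 : ℝ) else 0) := by
              apply Finset.sum_congr rfl
              intro j _
              rw [hall j]
          _ = ((Finset.univ.filter (fun j : Fin t => (j : ℕ) < i)).card : ℝ) := by
              simp [Finset.sum_boole]
          _ = (i : ℝ) := by rw [my_card t i hti]
      rw [hsum1] at hsum
      have h1 := ha i hri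
      have hi1 : (1 : ℝ) ≤ (i : ℝ) := by
        have : 1 ≤ i := le_trans hr hri
        exact_mod_cast this
      nlinarith
    rw [measure_mono_null hsubset (ae_iff.1 hae)]
    exact zero_le
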